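/- For every n ≥ 1 there is a short exact sequence of representations of Q of the form 0 → P₂ ⊕ P₄ⁿ → P₂ ⊕ P₁ⁿ → N_n → 0 (this is the minimal projective resolution of the special tube module N_n). -/

import Mathlib

variable (k : Type) [Field k]

/-- A finite-dimensional representation of the quiver `Q` with vertices `1,2,3,4`
and arrows `a : 1 → 2`, `b : 1 → 3`, `c : 2 → 4`, `d : 3 → 4`. -/
structure QRep where
  V1 : Type
  V2 : Type
  V3 : Type
  V4 : Type
  [acg1 : AddCommGroup V1]
  [acg2 : AddCommGroup V2]
  [acg3 : AddCommGroup V3]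
  [acg4 : AddCommGroup V4]
  [mod1 : Module k V1]
  [mod2 : Module k V2]
  [mod3 : Module k V3]
  [mod4 : Module k V4]
  [fin1 : FiniteDimensional k V1]
  [fin2 : FiniteDimensional k V2]
  [fin3 : FiniteDimensional k V3]
  [fin4 : FiniteDimensional k V4]
  ma : V1 →ₗ[k] V2
  mb : V1 →ₗ[k] V3
  mc : V2 →ₗ[k] V4
  md : V3 →ₗ[k] V4

attribute [instance] QRep.acg1 QRep.acg2 QRep.acg3 QRep.acg4
  QRep.mod1 QRep.mod2 QRep.mod3 QRep.mod4
  QRep.fin1 QRep.fin2 QRep.fin3 QRep.fin4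

variable {k}

/-- Morphisms of representations of `Q`. -/
@[ext]
structure QHom (M N : QRep k) where
  f1 : M.V1 →ₗ[k] N.V1
  f2 : M.V2 →ₗ[k] N.V2
  f3 : M.V3 →ₗ[k] N.V3
  f4 : M.V4 →ₗ[k] N.V4
  comm_a : f2 ∘ₗ M.ma = N.ma ∘ₗ f1
  comm_b : f3 ∘ₗ M.mb = N.mb ∘ₗ f1
  comm_c : f4 ∘ₗ M.mc = N.mc ∘ₗ f2
  comm_d : f4 ∘ₗ M.md = N.md ∘ₗ f3

/-- Two representations are isomorphic iff there is a morphism all of whose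
components are bijective. -/
def QIso (M N : QRep k) : Prop :=
  ∃ f : QHom M N, Function.Bijective f.f1 ∧ Function.Bijective f.f2 ∧
    Function.Bijective f.f3 ∧ Function.Bijective f.f4

/-- The zero representation(s). -/
def QRep.IsZeroRep (M : QRep k) : Prop :=
  Subsingleton M.V1 ∧ Subsingleton M.V2 ∧ Subsingleton M.V3 ∧ Subsingleton M.V4

/-- Vertexwise direct sum of representations. -/
def QRep.dsum (M N : QRep k) : QRep k where
  V1 := M.V1 × N.V1
  V2 := M.V2 × N.V2
  V3 := M.V3 × N.V3
  V4 := M.V4 × N.V4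
  ma := M.ma.prodMap N.ma
  mb := M.mb.prodMap N.mb
  mc := M.mc.prodMap N.mc
  md := M.md.prodMap N.md

/-- Direct sum of `n` copies of a representation. -/
def QRep.dpow (M : QRep k) (n : ℕ) : QRep k where
  V1 := Fin n → M.V1
  V2 := Fin n → M.V2
  V3 := Fin n → M.V3
  V4 := Fin n → M.V4
  ma := M.ma.compLeft (Fin n)
  mb := M.mb.compLeft (Fin n)
  mc := M.mc.compLeft (Fin n)
  md := M.md.compLeft (Fin n)

/-- A representation is indecomposable if it is nonzero and not isomorphic to a
direct sum of two nonzero representations. -/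
def QRep.Indecomposable (M : QRep k) : Prop :=
  ¬ M.IsZeroRep ∧ ∀ A B : QRep k, QIso M (A.dsum B) → A.IsZeroRep ∨ B.IsZeroRep

/-- `0 → A → B → C → 0` is short exact (vertexwise). -/
def QShortExact {A B C : QRep k} (f : QHom A B) (g : QHom B C) : Prop :=
  (Function.Injective f.f1 ∧ Function.Injective f.f2 ∧
    Function.Injective f.f3 ∧ Function.Injective f.f4) ∧
  (Function.Surjective g.f1 ∧ Function.Surjective g.f2 ∧
    Function.Surjective g.f3 ∧ Function.Surjective g.f4) ∧
  (LinearMap.range f.f1 = LinearMap.ker g.f1 ∧ LinearMap.range f.f2 = LinearMap.ker g.f2 ∧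
    LinearMap.range f.f3 = LinearMap.ker g.f3 ∧ LinearMap.range f.f4 = LinearMap.ker g.f4)

variable (k)

/-- The `n×n` Jordan block with eigenvalue `lam`, as a linear endomorphism of `kⁿ`. -/
def jordan (n : ℕ) (lam : k) : (Fin n → k) →ₗ[k] (Fin n → k) :=
  Matrix.mulVecLin (Matrix.of fun i j : Fin n =>
    if i = j then lam else if (i : ℕ) + 1 = (j : ℕ) then 1 else 0)

/-- The representation `M_n(λ) = (kⁿ,kⁿ,kⁿ,kⁿ; id,id,id,J_n(λ))`. -/
def Mlam (n : ℕ) (lam : k) : QRep k where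
  V1 := Fin n → k
  V2 := Fin n → k
  V3 := Fin n → k
  V4 := Fin n → k
  ma := LinearMap.id
  mb := LinearMap.id
  mc := LinearMap.id
  md := jordan k n lam

/-- The indecomposable projective `P₁ = (k,k,k,k²)`. -/
def P1 : QRep k where
  V1 := k
  V2 := k
  V3 := k
  V4 := k × k
  ma := LinearMap.id
  mb := LinearMap.id
  mc := LinearMap.inl k k k
  md := LinearMap.inr k k k

/-- The indecomposable projective `P₂ = (0,k,0,k)`. -/
def P2 : QRep k where
  V1 := Fin 0 → k
  V2 := k
  V3 := Fin 0 → k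
  V4 := k
  ma := 0
  mb := 0
  mc := LinearMap.id
  md := 0

/-- The indecomposable projective `P₃ = (0,0,k,k)`. -/
def P3 : QRep k where
  V1 := Fin 0 → k
  V2 := Fin 0 → k
  V3 := k
  V4 := k
  ma := 0
  mb := 0
  mc := 0
  md := LinearMap.id

/-- The indecomposable projective `P₄ = (0,0,0,k)`. -/
def P4 : QRep k where
  V1 := Fin 0 → k
  V2 := Fin 0 → k
  V3 := Fin 0 → k
  V4 := k
  ma := 0
  mb := 0
  mc := 0
  md := 0

/-- The special-tube representation `N_n = (kⁿ,kⁿ,kⁿ,kⁿ; J_n(0),id,id,id)`. -/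
def Nrep (n : ℕ) : QRep k where
  V1 := Fin n → k
  V2 := Fin n → k
  V3 := Fin n → k
  V4 := Fin n → k
  ma := jordan k n 0
  mb := LinearMap.id
  mc := LinearMap.id
  md := LinearMap.id


attribute [reducible] QRep.dsum QRep.dpow P1 P2 P4 Nrep

namespace Stmt4Aux

/-- Shift-up map: `(Sh v) i = v (i+1)` (0 at the top). -/
def Sh (n : ℕ) : (Fin n → k) →ₗ[k] (Fin n → k) where
  toFun v i := if h : (i:ℕ)+1 < n then v ⟨(i:ℕ)+1, h⟩ else 0
  map_add' x y := by funext i; dsimp; split <;> simp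
  map_smul' c x := by funext i; dsimp; split <;> simp

/-- Shift-down map: `(Tsh v) i = v (i-1)` (0 at the bottom). -/
def Tsh (n : ℕ) : (Fin n → k) →ₗ[k] (Fin n → k) where
  toFun v i := if 0 < (i:ℕ) then v ⟨(i:ℕ)-1, Nat.lt_of_le_of_lt (Nat.sub_le _ _) i.isLt⟩ else 0
  map_add' x y := by funext i; dsimp; split <;> simp
  map_smul' c x := by funext i; dsimp; split <;> simp

/-- `y ↦ y · e_j`. -/
def Ei (n j : ℕ) : k →ₗ[k] (Fin n → k) where
  toFun y i := if (i:ℕ) = j then y else 0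
  map_add' x y := by funext i; dsimp; split <;> simp
  map_smul' c x := by funext i; dsimp; split <;> simp

@[simp] lemma Sh_apply (n : ℕ) (v : Fin n → k) (i : Fin n) :
    Sh k n v i = if h : (i:ℕ)+1 < n then v ⟨(i:ℕ)+1, h⟩ else 0 := rfl

@[simp] lemma Tsh_apply (n : ℕ) (v : Fin n → k) (i : Fin n) :
    Tsh k n v i = if h : 0 < (i:ℕ) then
      v ⟨(i:ℕ)-1, Nat.lt_of_le_of_lt (Nat.sub_le _ _) i.isLt⟩ else 0 := rfl

@[simp] lemma Ei_apply (n j : ℕ) (y : k) (i : Fin n) :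
    Ei k n j y i = if (i:ℕ) = j then y else 0 := rfl

lemma jordan_zero_apply (n : ℕ) (v : Fin n → k) (i : Fin n) :
    jordan k n 0 v i = Sh k n v i := by
  simp only [jordan, Matrix.mulVecLin_apply, Matrix.mulVec, dotProduct, Matrix.of_apply,
    Sh_apply]
  have key : ∀ j : Fin n, (if i = j then (0:k) else if (i:ℕ)+1 = (j:ℕ) then 1 else 0) * v j
      = if (j:ℕ) = (i:ℕ)+1 then v j else 0 := by
    intro j
    rcases eq_or_ne i j with h | h
    · have : ((j:ℕ) = (i:ℕ)+1) = False := by subst h; simp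
      simp [h, this]
    · rcases eq_or_ne ((i:ℕ)+1) (j:ℕ) with h2 | h2
      · rw [if_neg h, if_pos h2, if_pos h2.symm, one_mul]
      · rw [if_neg h, if_neg h2, if_neg (Ne.symm h2), zero_mul]
  rw [Finset.sum_congr rfl fun j _ => key j]
  split
  · next h =>
    rw [Finset.sum_eq_single (⟨(i:ℕ)+1, h⟩ : Fin n)]
    · simp
    · intro b _ hb
      have : (b:ℕ) ≠ (i:ℕ)+1 := fun hc => hb (Fin.ext hc)
      simp [this]
    · simp
  · next h =>
    apply Finset.sum_eq_zero
    intro j _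
    have : (j:ℕ) ≠ (i:ℕ)+1 := by have := j.isLt; omega
    simp [this]

variable (n : ℕ) (hn : 1 ≤ n)

/-- The last index. -/
def lst : Fin n := ⟨n-1, by omega⟩

/-- The map `P₂ ⊕ P₄ⁿ → P₂ ⊕ P₁ⁿ`. -/
def fHom : QHom ((P2 k).dsum ((P4 k).dpow n)) ((P2 k).dsum ((P1 k).dpow n)) where
  f1 := 0
  f2 := LinearMap.prod 0 (Ei k n 0 ∘ₗ LinearMap.fst k k _)
  f3 := 0
  f4 := LinearMap.prod
          (LinearMap.proj (lst n hn) ∘ₗ LinearMap.snd k k _)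
          (LinearMap.pi fun i => LinearMap.prod
            (LinearMap.proj i ∘ₗ
              (Ei k n 0 ∘ₗ LinearMap.fst k k _ + Tsh k n ∘ₗ LinearMap.snd k k _))
            (-(LinearMap.proj i ∘ₗ LinearMap.snd k k _)))
  comm_a := by
    apply LinearMap.ext; intro x
    have hx : x = 0 := Subsingleton.elim (α := (Fin 0 → k) × (Fin n → (Fin 0 → k))) x 0
    rw [hx]; simp
  comm_b := by
    apply LinearMap.ext; intro x
    have hx : x = 0 := Subsingleton.elim (α := (Fin 0 → k) × (Fin n → (Fin 0 → k))) x 0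
    rw [hx]; simp
  comm_c := by
    apply LinearMap.ext; intro x
    obtain ⟨y, v⟩ := x
    simp only [QRep.dsum, QRep.dpow, P2, P4, P1, LinearMap.comp_apply, LinearMap.prodMap_apply,
      LinearMap.prod_apply, Function.prod, LinearMap.compLeft_apply, LinearMap.zero_apply,
      LinearMap.pi_apply, LinearMap.proj_apply, LinearMap.add_apply, LinearMap.neg_apply,
      LinearMap.fst_apply, LinearMap.snd_apply, LinearMap.id_coe, id_eq, Pi.add_apply,
      LinearMap.inl_apply, Prod.mk.injEq]
    constructor
    · rfl
    · funext i
      simp [Function.comp, Prod.ext_iff]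
  comm_d := by
    apply LinearMap.ext; intro x
    have hx : x = 0 := Subsingleton.elim (α := (Fin 0 → k) × (Fin n → (Fin 0 → k))) x 0
    rw [hx]; simp
    funext i; simp

/-- The map `P₂ ⊕ P₁ⁿ → N_n`. -/
def gHom : QHom ((P2 k).dsum ((P1 k).dpow n)) (Nrep k n) where
  f1 := LinearMap.snd k (Fin 0 → k) (Fin n → k)
  f2 := Sh k n ∘ₗ LinearMap.snd k k _ + Ei k n (n-1) ∘ₗ LinearMap.fst k k _
  f3 := LinearMap.snd k (Fin 0 → k) (Fin n → k)
  f4 := Sh k n ∘ₗ (LinearMap.fst k k k).compLeft (Fin n) ∘ₗ LinearMap.snd k k _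
        + Ei k n (n-1) ∘ₗ LinearMap.fst k k _
        + (LinearMap.snd k k k).compLeft (Fin n) ∘ₗ LinearMap.snd k k _
  comm_a := by
    apply LinearMap.ext; intro x
    obtain ⟨y, v⟩ := x
    funext i
    simp only [QRep.dsum, QRep.dpow, P2, P1, Nrep, LinearMap.comp_apply, LinearMap.prodMap_apply,
      LinearMap.compLeft_apply, LinearMap.zero_apply, LinearMap.add_apply,
      LinearMap.fst_apply, LinearMap.snd_apply, LinearMap.id_coe, id_eq, Pi.add_apply,
      jordan_zero_apply, Sh_apply, Ei_apply]
    simp [Function.comp]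
  comm_b := by
    apply LinearMap.ext; intro x
    obtain ⟨y, v⟩ := x
    rfl
  comm_c := by
    apply LinearMap.ext; intro x
    obtain ⟨y, v⟩ := x
    funext i
    simp only [QRep.dsum, QRep.dpow, P2, P1, Nrep, LinearMap.comp_apply, LinearMap.prodMap_apply,
      LinearMap.compLeft_apply, LinearMap.add_apply, LinearMap.fst_apply, LinearMap.snd_apply,
      LinearMap.id_coe, id_eq, Pi.add_apply, Sh_apply, Ei_apply, LinearMap.inl_apply]
    simp [Function.comp]
  comm_d := by
    apply LinearMap.ext; intro x
    obtain ⟨y, v⟩ := x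
    funext i
    simp only [QRep.dsum, QRep.dpow, P2, P1, Nrep, LinearMap.comp_apply, LinearMap.prodMap_apply,
      LinearMap.compLeft_apply, LinearMap.add_apply, LinearMap.fst_apply, LinearMap.snd_apply,
      LinearMap.id_coe, id_eq, Pi.add_apply, Sh_apply, Ei_apply, LinearMap.inr_apply,
      LinearMap.zero_apply]
    simp [Function.comp]

@[simp] lemma lst_val : ((lst n hn : Fin n) : ℕ) = n - 1 := rfl

@[simp] lemma fHom_f1_apply (x : (Fin 0 → k) × (Fin n → (Fin 0 → k))) :
    (fHom k n hn).f1 x = 0 := rfl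

@[simp] lemma fHom_f2_apply (x : k × (Fin n → (Fin 0 → k))) :
    (fHom k n hn).f2 x = ((0 : k), Ei k n 0 x.1) := rfl

@[simp] lemma fHom_f3_apply (x : (Fin 0 → k) × (Fin n → (Fin 0 → k))) :
    (fHom k n hn).f3 x = 0 := rfl

@[simp] lemma fHom_f4_apply (x : k × (Fin n → k)) :
    (fHom k n hn).f4 x
      = (x.2 (lst n hn), fun i => (Ei k n 0 x.1 i + Tsh k n x.2 i, -(x.2 i))) := rfl

@[simp] lemma gHom_f1_apply (x : (Fin 0 → k) × (Fin n → k)) :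
    (gHom k n).f1 x = x.2 := rfl

@[simp] lemma gHom_f2_apply (x : k × (Fin n → k)) (i : Fin n) :
    (gHom k n).f2 x i = Sh k n x.2 i + Ei k n (n-1) x.1 i := rfl

@[simp] lemma gHom_f3_apply (x : (Fin 0 → k) × (Fin n → k)) :
    (gHom k n).f3 x = x.2 := rfl

@[simp] lemma gHom_f4_apply (x : k × (Fin n → k × k)) (i : Fin n) :
    (gHom k n).f4 x i
      = Sh k n (fun j => (x.2 j).1) i + Ei k n (n-1) x.1 i + (x.2 i).2 := rfl

end Stmt4Aux

theorem stmt4 (k : Type) [Field k] (n : ℕ) (hn : 1 ≤ n) :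
    ∃ (f : QHom ((P2 k).dsum ((P4 k).dpow n)) ((P2 k).dsum ((P1 k).dpow n)))
      (g : QHom ((P2 k).dsum ((P1 k).dpow n)) (Nrep k n)),
      QShortExact f g := by
  refine ⟨Stmt4Aux.fHom k n hn, Stmt4Aux.gHom k n, ⟨?_, ?_, ?_, ?_⟩, ⟨?_, ?_, ?_, ?_⟩,
    ?_, ?_, ?_, ?_⟩
  · -- f1 injective
    exact fun a b _ => Subsingleton.elim (α := (Fin 0 → k) × (Fin n → (Fin 0 → k))) a b
  · -- f2 injective
    intro a b h
    obtain ⟨y, v⟩ := a; obtain ⟨y', v'⟩ := b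
    have h2 := congrFun (congrArg Prod.snd h) ⟨0, by omega⟩
    erw [Stmt4Aux.fHom_f2_apply, Stmt4Aux.fHom_f2_apply] at h2
    simp at h2
    exact Prod.ext h2 (Subsingleton.elim (α := Fin n → (Fin 0 → k)) v v')
  · -- f3 injective
    exact fun a b _ => Subsingleton.elim (α := (Fin 0 → k) × (Fin n → (Fin 0 → k))) a b
  · -- f4 injective
    intro a b h
    obtain ⟨y, u⟩ := a; obtain ⟨y', u'⟩ := b
    erw [Stmt4Aux.fHom_f4_apply, Stmt4Aux.fHom_f4_apply] at h
    have h2 := congrArg Prod.snd h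
    have hu : u = u' := by
      funext i
      have h3 := congrArg Prod.snd (congrFun h2 i)
      simpa using h3
    subst hu
    have hy : y = y' := by
      have h4 := congrArg Prod.fst (congrFun h2 ⟨0, by omega⟩)
      simpa using h4
    subst hy
    rfl
  · -- g1 surjective
    exact fun w => ⟨((0 : Fin 0 → k), w), rfl⟩
  · -- g2 surjective
    intro w
    refine ⟨(w (Stmt4Aux.lst n hn), fun i => Stmt4Aux.Tsh k n w i), ?_⟩
    funext i
    rw [Stmt4Aux.gHom_f2_apply]
    rcases Nat.lt_or_ge ((i:ℕ)+1) n with h | h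
    · have h2 : ¬ ((i:ℕ) = n - 1) := by omega
      simp [h, h2]
    · have h1 : ¬ ((i:ℕ)+1 < n) := by omega
      have h2 : (i:ℕ) = n - 1 := by omega
      have h3 : Stmt4Aux.lst n hn = i := Fin.ext (by simp [h2])
      have h4 : ¬ (n - 1 + 1 < n) := by omega
      simp [h1, h2, h3, h4]
  · -- g3 surjective
    exact fun w => ⟨((0 : Fin 0 → k), w), rfl⟩
  · -- g4 surjective
    intro w
    refine ⟨((0:k), fun i => ((0:k), w i)), ?_⟩
    funext i
    rw [Stmt4Aux.gHom_f4_apply]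
    simp
  · -- range f1 = ker g1
    apply le_antisymm
    · rintro x ⟨a, rfl⟩
      rw [LinearMap.mem_ker]
      rfl
    · intro x hx
      have hx2 := LinearMap.mem_ker.mp hx
      rw [Stmt4Aux.gHom_f1_apply] at hx2
      refine ⟨0, ?_⟩
      rw [map_zero]
      exact (Prod.ext (Subsingleton.elim (α := Fin 0 → k) _ _) hx2).symm
  · -- range f2 = ker g2
    apply le_antisymm
    · rintro x ⟨⟨a, b⟩, rfl⟩
      rw [LinearMap.mem_ker]
      funext i
      rw [Stmt4Aux.gHom_f2_apply]
      simp
      erw [Stmt4Aux.fHom_f2_apply]; simp; rfl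
    · intro x hx
      obtain ⟨y, v⟩ := x
      have hk := LinearMap.mem_ker.mp hx
      have hy : y = 0 := by
        have h0 := congrFun hk (Stmt4Aux.lst n hn)
        rw [Stmt4Aux.gHom_f2_apply] at h0
        have h1 : ¬ ((n-1)+1 < n) := by omega
        simp [h1] at h0; exact h0
      have hv : ∀ j : Fin n, 0 < (j:ℕ) → v j = 0 := by
        intro j hj
        have h0 := congrFun hk ⟨(j:ℕ)-1, by omega⟩
        rw [Stmt4Aux.gHom_f2_apply] at h0
        have h1 : ((j:ℕ)-1)+1 < n := by omega
        have h3 : ¬ ((j:ℕ)-1 = n-1) := by omega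
        simp [h1, h3, hy] at h0
        have h2 : (⟨(j:ℕ)-1+1, h1⟩ : Fin n) = j := Fin.ext (show (j:ℕ)-1+1 = (j:ℕ) by omega)
        rwa [h2] at h0
      refine ⟨(v ⟨0, by omega⟩, 0), ?_⟩
      rw [Stmt4Aux.fHom_f2_apply]
      refine Prod.ext ?_ ?_
      · exact hy.symm
      · funext j
        rcases Nat.eq_zero_or_pos (j:ℕ) with h0 | h0
        · have e : (⟨0, by omega⟩ : Fin n) = j := Fin.ext (show (0:ℕ) = (j:ℕ) by omega)
          simp [h0, e]
        · have h1 : ¬ ((j:ℕ) = 0) := by omega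
          simp [h1]
          exact (hv j h0).symm
  · -- range f3 = ker g3
    apply le_antisymm
    · rintro x ⟨a, rfl⟩
      rw [LinearMap.mem_ker]
      rfl
    · intro x hx
      have hx2 := LinearMap.mem_ker.mp hx
      rw [Stmt4Aux.gHom_f3_apply] at hx2
      refine ⟨0, ?_⟩
      rw [map_zero]
      exact (Prod.ext (Subsingleton.elim (α := Fin 0 → k) _ _) hx2).symm
  · -- range f4 = ker g4
    apply le_antisymm
    · rintro x ⟨⟨y, u⟩, rfl⟩
      rw [LinearMap.mem_ker]
      funext i
      rw [Stmt4Aux.gHom_f4_apply, Stmt4Aux.fHom_f4_apply]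
      rcases Nat.lt_or_ge ((i:ℕ)+1) n with h | h
      · have h2 : ¬ ((i:ℕ) = n - 1) := by omega
        have e : (⟨(i:ℕ)+1-1, by omega⟩ : Fin n) = i := Fin.ext (show (i:ℕ)+1-1 = (i:ℕ) by omega)
        simp [h, h2, e]
        rfl
      · have h1 : ¬ ((i:ℕ)+1 < n) := by omega
        have h2 : (i:ℕ) = n - 1 := by omega
        have h3 : Stmt4Aux.lst n hn = i := Fin.ext (by simp [h2])
        have h4 : ¬ (n - 1 + 1 < n) := by omega
        simp [h1, h2, h3, h4]
        rfl
    · intro x hx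
      obtain ⟨c, w⟩ := x
      have hk := LinearMap.mem_ker.mp hx
      refine ⟨((w ⟨0, by omega⟩).1,
        fun i => Stmt4Aux.Sh k n (fun j => (w j).1) i + Stmt4Aux.Ei k n (n-1) c i), ?_⟩
      rw [Stmt4Aux.fHom_f4_apply]
      refine Prod.ext ?_ ?_
      · -- first component : u lst = c
        have h1 : ¬ ((n-1)+1 < n) := by omega
        simp [h1]
      · funext i
        refine Prod.ext ?_ ?_
        · -- (E0 y + Tsh u) i = (w i).1
          rcases Nat.eq_zero_or_pos (i:ℕ) with h0 | h0
          · have h1 : ¬ (0 < (i:ℕ)) := by omega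
            have e : (⟨0, by omega⟩ : Fin n) = i := Fin.ext (show (0:ℕ) = (i:ℕ) by omega)
            simp [h0, h1, e]
          · have h1 : ¬ ((i:ℕ) = 0) := by omega
            have h2 : ((i:ℕ)-1)+1 < n := by omega
            have h3 : ¬ ((i:ℕ)-1 = n-1) := by omega
            have e : (⟨(i:ℕ)-1+1, h2⟩ : Fin n) = i := Fin.ext (show (i:ℕ)-1+1 = (i:ℕ) by omega)
            simp [h0, h1, h2, h3, e]
        · -- -(u i) = (w i).2
          have h0 := congrFun hk i
          rw [Stmt4Aux.gHom_f4_apply] at h0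
          replace h0 : Stmt4Aux.Sh k n (fun j => (w j).1) i
              + Stmt4Aux.Ei k n (n - 1) c i + (w i).2 = 0 := h0
          show -(Stmt4Aux.Sh k n (fun j => (w j).1) i + Stmt4Aux.Ei k n (n - 1) c i) = (w i).2
          linear_combination -h0
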